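/- For any p̂ ∈ [0,1], any integer n ≥ 2 and any real L > 0, the set 𝒫₁(p̂,n,L) := { p' ∈ [0,1] : |p̂ − p'| ≤ √(L/(2n)), |p̂ − p'| ≤ √(2 p̂ (1−p̂) L / n) + 7L/(3(n−1)), and p'(1−p') ≥ (max{0, √(p̂(1−p̂)) − √(2L/(n−1))})² } is a convex subset of ℝ, and 𝒫(p̂,n,L) ⊆ 𝒫₁(p̂,n,L). -/
import Mathlib


/-- The confidence set `𝒫(p̂,n,L)` of transition probabilities. -/
def confSet (phat : ℝ) (n : ℕ) (L : ℝ) : Set ℝ :=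
  {p' | 0 ≤ p' ∧ p' ≤ 1 ∧
    |Real.sqrt (p' * (1 - p')) - Real.sqrt (phat * (1 - phat))| ≤
      Real.sqrt (2 * L / ((n : ℝ) - 1)) ∧
    |phat - p'| ≤ Real.sqrt (L / (2 * n)) ∧
    |phat - p'| ≤ Real.sqrt (2 * phat * (1 - phat) * L / n) + 7 * L / (3 * ((n : ℝ) - 1))}

/-- The relaxed confidence set `𝒫₁(p̂,n,L)`. -/
def confSet1 (phat : ℝ) (n : ℕ) (L : ℝ) : Set ℝ :=
  {p' | 0 ≤ p' ∧ p' ≤ 1 ∧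
    |phat - p'| ≤ Real.sqrt (L / (2 * n)) ∧
    |phat - p'| ≤ Real.sqrt (2 * phat * (1 - phat) * L / n) + 7 * L / (3 * ((n : ℝ) - 1)) ∧
    (max 0 (Real.sqrt (phat * (1 - phat)) - Real.sqrt (2 * L / ((n : ℝ) - 1)))) ^ 2 ≤
      p' * (1 - p')}

/-- `𝒫₁(p̂,n,L)` is convex and contains the confidence set `𝒫(p̂,n,L)`. -/
theorem confSet1_convex_and_confSet_subset
    (phat : ℝ) (hphat0 : 0 ≤ phat) (hphat1 : phat ≤ 1)
    (n : ℕ) (hn : 2 ≤ n) (L : ℝ) (hL : 0 < L) :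
    Convex ℝ (confSet1 phat n L) ∧ confSet phat n L ⊆ confSet1 phat n L := by
  constructor
  · rintro x ⟨hx0, hx1, hx3, hx4, hx5⟩ y ⟨hy0, hy1, hy3, hy4, hy5⟩ a b ha hb hab
    simp only [smul_eq_mul, confSet1, Set.mem_setOf_eq]
    refine ⟨by positivity, ?_, ?_, ?_, ?_⟩
    · nlinarith
    · have := abs_le.mp hx3
      have := abs_le.mp hy3
      rw [abs_le]; constructor <;> nlinarith [Real.sqrt_nonneg (L / (2 * n))]
    · have := abs_le.mp hx4
      have := abs_le.mp hy4
      rw [abs_le]; constructor <;> nlinarith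
    · set m := (0 ⊔ (Real.sqrt (phat * (1 - phat)) - Real.sqrt (2 * L / ((n : ℝ) - 1)))) ^ 2
        with hm
      have key : a * (x * (1 - x)) + b * (y * (1 - y)) ≤
          (a * x + b * y) * (1 - (a * x + b * y)) := by
        have hb' : b = 1 - a := by linarith
        subst hb'
        nlinarith [mul_nonneg (mul_nonneg ha hb) (sq_nonneg (x - y))]
      have h1 : a * m ≤ a * (x * (1 - x)) := mul_le_mul_of_nonneg_left hx5 ha
      have h2 : b * m ≤ b * (y * (1 - y)) := mul_le_mul_of_nonneg_left hy5 hb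
      have h3 : a * m + b * m = m := by rw [← add_mul, hab, one_mul]
      linarith
  · rintro p' ⟨hp0, hp1, h2, h3, h4⟩
    refine ⟨hp0, hp1, h3, h4, ?_⟩
    rcases le_or_gt (Real.sqrt (phat * (1 - phat)) - Real.sqrt (2 * L / ((n : ℝ) - 1))) 0 with h | h
    · rw [max_eq_left h]
      nlinarith
    · rw [max_eq_right h.le]
      have hle : Real.sqrt (phat * (1 - phat)) - Real.sqrt (2 * L / ((n : ℝ) - 1)) ≤
          Real.sqrt (p' * (1 - p')) := by
        have := abs_le.mp h2
        linarith [this.1]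
      calc (Real.sqrt (phat * (1 - phat)) - Real.sqrt (2 * L / ((n : ℝ) - 1))) ^ 2
          ≤ Real.sqrt (p' * (1 - p')) ^ 2 := by
            apply sq_le_sq' (by nlinarith [Real.sqrt_nonneg (p' * (1 - p'))]) hle
        _ = p' * (1 - p') := Real.sq_sqrt (by nlinarith)
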